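/- For even n, the ⌊n/2⌋² pyramidal tours x(k,s), 0 ≤ k, s ≤ (n−2)/2, defined by visiting cities 2,...,k+1 and n−s,...,n−1 in ascending order and all other intermediate cities in descending order (with no step-backs), are pairwise distinct and the corresponding vertices of PSB(n) are pairwise adjacent; hence the clique number of the 1-skeleton of PSB(n) is at least ⌊n/2⌋². -/

import Mathlib

/-- A Hamiltonian tour on the cities `{1,…,n}` (represented as `Fin n`,
city `c` corresponding to the element `c-1`): a permutation acting cyclically on all cities. -/
def IsTour {n : ℕ} (τ : Equiv.Perm (Fin n)) : Prop :=
  ∀ i j : Fin n, ∃ k : ℕ, (τ ^ k) i = j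

/-- `i` is a peak of the tour `τ`. -/
def IsPeak {n : ℕ} (τ : Equiv.Perm (Fin n)) (i : Fin n) : Prop :=
  τ⁻¹ i < i ∧ τ i < i

/-- `i` is a step-back peak of `τ`: either `τ⁻¹ i < i`, `τ i = i - 1`, `τ² i > i`
(ascending step-back) or `τ⁻² i > i`, `τ⁻¹ i = i - 1`, `τ i < i` (descending step-back). -/
def IsStepBackPeak {n : ℕ} (τ : Equiv.Perm (Fin n)) (i : Fin n) : Prop :=
  (τ⁻¹ i < i ∧ ((τ i : ℕ) + 1 = (i : ℕ)) ∧ i < τ (τ i)) ∨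
  (i < τ⁻¹ (τ⁻¹ i) ∧ ((τ⁻¹ i : ℕ) + 1 = (i : ℕ)) ∧ τ i < i)

/-- A pyramidal tour: a Hamiltonian tour whose unique peak is the last city `n`. -/
def IsPyramidal {n : ℕ} (τ : Equiv.Perm (Fin n)) : Prop :=
  IsTour τ ∧ ∀ i : Fin n, IsPeak τ i ↔ (i : ℕ) = n - 1

/-- A pyramidal tour with step-backs: a Hamiltonian tour with exactly one proper peak
(a peak that is not a step-back peak), namely the last city `n`. -/
def IsPSB {n : ℕ} (τ : Equiv.Perm (Fin n)) : Prop :=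
  IsTour τ ∧ ∀ i : Fin n, (IsPeak τ i ∧ ¬ IsStepBackPeak τ i) ↔ (i : ℕ) = n - 1

/-- City `i` is visited by `τ` in ascending order (taking step-backs into account):
either the successor of `i` is larger and `i` is not the lower city of a descending
step-back, or `i` is an ascending step-back peak. -/
def Ascends {n : ℕ} (τ : Equiv.Perm (Fin n)) (i : Fin n) : Prop :=
  (i < τ i ∧ ¬ (((i : ℕ) + 1 = (τ i : ℕ)) ∧ τ (τ i) < τ i ∧ τ i < τ⁻¹ i)) ∨
  (τ⁻¹ i < i ∧ ((τ i : ℕ) + 1 = (i : ℕ)) ∧ i < τ (τ i))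

/-- The city represented by the element of `Fin n` with value `m` is visited ascending. -/
def AscAt {n : ℕ} (τ : Equiv.Perm (Fin n)) (m : ℕ) : Prop :=
  ∃ i : Fin n, (i : ℕ) = m ∧ Ascends τ i

/-- The city represented by the element of `Fin n` with value `m` is a step-back peak. -/
def SBPeakAt {n : ℕ} (τ : Equiv.Perm (Fin n)) (m : ℕ) : Prop :=
  ∃ i : Fin n, (i : ℕ) = m ∧ IsStepBackPeak τ i

/-- The pyramidal encodings of `x` and `y` have the same value at coordinate `m`. -/
def SameEnc {n : ℕ} (x y : Equiv.Perm (Fin n)) (m : ℕ) : Prop :=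
  (AscAt x m ↔ AscAt y m) ∧ (SBPeakAt x m ↔ SBPeakAt y m)

/-- The pyramidal encodings of `x` and `y` agree on the pair of neighboring
coordinates `(k, k+1)`, including the step-back marks overlapping the pair. -/
def SamePair {n : ℕ} (x y : Equiv.Perm (Fin n)) (k : ℕ) : Prop :=
  SameEnc x y k ∧ SameEnc x y (k + 1) ∧ (SBPeakAt x (k + 2) ↔ SBPeakAt y (k + 2))

/-- Characteristic vector of a tour, in `ℝ^E` with `E = Fin n × Fin n`. -/
def chv {n : ℕ} (τ : Equiv.Perm (Fin n)) : Fin n × Fin n → ℝ :=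
  fun e => if τ e.1 = e.2 then 1 else 0

/-- The vertices of the polytope `PSB(n)`: characteristic vectors of all
pyramidal tours with step-backs. -/
def PSBvertices (n : ℕ) : Set (Fin n × Fin n → ℝ) :=
  chv '' {τ : Equiv.Perm (Fin n) | IsPSB τ}

/-- `u` and `w` are adjacent vertices in the 1-skeleton of the polytope `conv S`:
the segment `[u,w]` is a one-dimensional face (an extreme subset) of the polytope. -/
def AdjacentIn {n : ℕ} (S : Set (Fin n × Fin n → ℝ)) (u w : Fin n × Fin n → ℝ) : Prop :=
  u ≠ w ∧ IsExtreme ℝ (convexHull ℝ S) (segment ℝ u w)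


namespace PSBgo

/-- Engine hypotheses: no fixed points, no peaks except the last element,
and the last element is a peak. -/
structure Eng {n : ℕ} (τ : Equiv.Perm (Fin n)) : Prop where
  nfix : ∀ i, τ i ≠ i
  npeak : ∀ i : Fin n, (i : ℕ) + 1 < n → τ⁻¹ i < i → i < τ i
  lastd : ∀ i : Fin n, (i : ℕ) + 1 = n → τ i < i
  lastd' : ∀ i : Fin n, (i : ℕ) + 1 = n → τ⁻¹ i < i

variable {n : ℕ} {τ υ : Equiv.Perm (Fin n)}

/-- target-set membership predicate -/
def TT (τ : Equiv.Perm (Fin n)) (c : Fin n) : Prop :=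
  (c < τ c ∧ (c : ℕ) ≠ 0) ∨ (c : ℕ) + 1 = n

lemma inv_fix_iff (i : Fin n) : τ⁻¹ i = i ↔ τ i = i := by
  rw [Equiv.Perm.inv_eq_iff_eq, eq_comm]

lemma engInv (he : Eng τ) : Eng τ⁻¹ where
  nfix i h := he.nfix i ((inv_fix_iff i).mp h)
  npeak i hi hlt := by
    simp only [inv_inv] at hlt
    rcases lt_trichotomy i (τ⁻¹ i) with h | h | h
    · exact h
    · exact absurd ((inv_fix_iff i).mp h.symm) (he.nfix i)
    · exact absurd hlt (not_lt.mpr (le_of_lt (he.npeak i hi h)))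
  lastd i hi := he.lastd' i hi
  lastd' i hi := by simpa using he.lastd i hi

/-- E1a : the image of an ascending point is in the target set. -/
lemma E1a (he : Eng τ) {a : Fin n} (ha : a < τ a) : TT τ (τ a) := by
  rcases Nat.lt_or_ge ((τ a : ℕ) + 1) n with h | h
  · left
    constructor
    · apply he.npeak (τ a) h
      rw [show τ⁻¹ (τ a) = a from τ.symm_apply_apply a]; exact ha
    · have : (a : ℕ) < (τ a : ℕ) := ha
      omega
  · right
    have := (τ a).isLt
    omega

/-- E1b : counting, the map is onto the target set. -/
lemma E1b (he : Eng τ) (hn : 0 < n) {c : Fin n} (hc : TT τ c) :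
    ∃ a, a < τ a ∧ τ a = c := by
  classical
  set Af : Finset (Fin n) := Finset.univ.filter (fun a => a < τ a) with hAf
  have hmemAf : ∀ a : Fin n, a ∈ Af ↔ a < τ a := by
    intro a; simp [hAf]
  set z : Fin n := ⟨0, hn⟩ with hz
  set lst : Fin n := ⟨n - 1, by omega⟩ with hlst
  set T : Finset (Fin n) := (Af.erase z) ∪ {lst} with hT
  have hzv : (z : ℕ) = 0 := rfl
  have h0 : z ∈ Af := by
    rw [hmemAf]
    have hne := he.nfix z
    have : (τ z : ℕ) ≠ 0 := by
      intro h; exact hne (Fin.ext (by omega))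
    rw [Fin.lt_def]; omega
  have hlastnot : lst ∉ Af := by
    rw [hmemAf]
    have := he.lastd lst (by simp [hlst]; omega)
    exact not_lt.mpr (le_of_lt this)
  have hsub : Af.image τ ⊆ T := by
    intro b hb
    rcases Finset.mem_image.mp hb with ⟨a, ha, rfl⟩
    rw [hmemAf] at ha
    rcases E1a he ha with ⟨h1, h2⟩ | h1
    · apply Finset.mem_union_left
      apply Finset.mem_erase.mpr
      refine ⟨?_, (hmemAf _).mpr h1⟩
      intro hh; apply h2; rw [hh]
    · apply Finset.mem_union_right; simp [hlst]
      apply Fin.ext; simp; omega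
  have hcards : T.card ≤ (Af.image τ).card := by
    have h1 : (Af.image τ).card = Af.card :=
      Finset.card_image_of_injective _ τ.injective
    have h2 : T.card = (Af.erase z).card + 1 := by
      rw [hT]
      rw [Finset.card_union_of_disjoint]
      · simp
      · simp only [Finset.disjoint_singleton_right]
        intro hmem
        exact hlastnot (Finset.mem_of_mem_erase hmem)
    have h3 : (Af.erase z).card = Af.card - 1 := Finset.card_erase_of_mem h0
    have h4 : 1 ≤ Af.card := Finset.card_pos.mpr ⟨z, h0⟩
    omega
  have heq : Af.image τ = T := Finset.eq_of_subset_of_card_le hsub hcards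
  have hcT : c ∈ T := by
    rcases hc with ⟨h1, h2⟩ | h1
    · apply Finset.mem_union_left
      apply Finset.mem_erase.mpr
      refine ⟨?_, (hmemAf _).mpr h1⟩
      intro hh; apply h2; rw [hh]
    · apply Finset.mem_union_right; simp [hlst]
      apply Fin.ext; simp; omega
  rw [← heq] at hcT
  rcases Finset.mem_image.mp hcT with ⟨a, ha, h⟩
  exact ⟨a, (hmemAf _).mp ha, h⟩

/-- E1c : minimality. -/
lemma E1c (he : Eng τ) (hn : 0 < n) :
    ∀ m : ℕ, ∀ a c : Fin n, (c : ℕ) ≤ m → a < τ a → TT τ c → a < c → τ a ≤ c := by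
  intro m
  induction m with
  | zero =>
    intro a c hc _ _ hac
    exact absurd hac (by rw [Fin.lt_def]; omega)
  | succ m ih =>
    intro a c hc ha hcT hac
    rcases E1b he hn hcT with ⟨a', ha', hae⟩
    rcases lt_trichotomy a' a with h | h | h
    · -- a' < a : then τ a' ≤ a (a ∈ TT), but τ a' = c > a, contradiction
      exfalso
      have haT : TT τ a := by
        left
        refine ⟨ha, ?_⟩
        have : (a' : ℕ) < (a : ℕ) := h
        omega
      have h2 : τ a' ≤ a := by
        apply ih a' a _ ha' haT h
        have h3 : (a : ℕ) < (c : ℕ) := hac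
        omega
      rw [hae] at h2
      exact absurd hac (not_lt.mpr h2)
    · rw [← h, hae]
    · -- a < a' : recurse with c := a'
      have ha'T : TT τ a' := by
        left
        refine ⟨ha', ?_⟩
        have : (a : ℕ) < (a' : ℕ) := h
        omega
      have ha'c : (a' : ℕ) < (c : ℕ) := by
        rw [← hae]; exact ha'
      have := ih a a' (by omega) ha ha'T h
      calc τ a ≤ a' := this
        _ ≤ c := le_of_lt (by rw [Fin.lt_def]; exact ha'c)

/-- E1d : the ascending set of the inverse. -/
lemma E1d (he : Eng τ) (hn : 0 < n) (i : Fin n) :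
    i < τ⁻¹ i ↔ ((i : ℕ) = 0 ∨ (¬ i < τ i ∧ (i : ℕ) + 1 ≠ n)) := by
  constructor
  · intro h
    by_cases h0 : (i : ℕ) = 0
    · exact Or.inl h0
    right
    constructor
    · -- if i < τ i then i would be in the image target, giving τ⁻¹ i < i
      intro hup
      have hT : TT τ i := by
        left; exact ⟨hup, h0⟩
      rcases E1b he hn hT with ⟨a, ha, hae⟩
      have hinv : τ⁻¹ i = a := by rw [Equiv.Perm.inv_eq_iff_eq]; exact hae.symm
      have v1 : (a : ℕ) < (i : ℕ) := by rw [← hae]; exact ha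
      have v2 : (i : ℕ) < (τ⁻¹ i : ℕ) := h
      have v3 : ((τ⁻¹ i : Fin n) : ℕ) = (a : ℕ) := congrArg Fin.val hinv
      omega
    · intro hl
      exact absurd h (not_lt.mpr (le_of_lt (he.lastd' i hl)))
  · rintro (h0 | ⟨hnd, hnl⟩)
    · have := (engInv he).nfix i
      rw [Fin.lt_def]
      rcases Nat.eq_zero_or_pos (τ⁻¹ i : ℕ) with h | h
      · exfalso; apply this; apply Fin.ext; omega
      · omega
    · rcases lt_trichotomy i (τ⁻¹ i) with h | h | h
      · exact h
      · exact absurd ((inv_fix_iff i).mp h.symm) (he.nfix i)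
      · exfalso
        have hi : (i : ℕ) + 1 < n := by have := i.isLt; omega
        exact hnd (he.npeak i hi h)

/-- agreement on the ascending set -/
lemma agreeA (he : Eng τ) (hf : Eng υ) (hn : 0 < n)
    (hiff : ∀ i, i < τ i ↔ i < υ i) {a : Fin n} (ha : a < τ a) : τ a = υ a := by
  have ha' : a < υ a := (hiff a).mp ha
  have h1 : TT υ (υ a) := E1a hf ha'
  have h1' : TT τ (υ a) := by
    rcases h1 with ⟨hh, h2⟩ | hh
    · left; exact ⟨(hiff _).mpr hh, h2⟩
    · right; exact hh
  have h2 : TT τ (τ a) := E1a he ha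
  have h2' : TT υ (τ a) := by
    rcases h2 with ⟨hh, hb⟩ | hh
    · left; exact ⟨(hiff _).mp hh, hb⟩
    · right; exact hh
  have le1 : τ a ≤ υ a := E1c he hn _ a (υ a) le_rfl ha h1' ha'
  have le2 : υ a ≤ τ a := E1c hf hn _ a (τ a) le_rfl ha' h2' ha
  exact le_antisymm le1 le2

/-- Determination : two engine permutations with the same ascent sets are equal. -/
lemma DET (he : Eng τ) (hf : Eng υ) (hn : 0 < n)
    (hiff : ∀ i, i < τ i ↔ i < υ i) : τ = υ := by
  have hinviff : ∀ i, i < τ⁻¹ i ↔ i < υ⁻¹ i := by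
    intro i
    rw [E1d he hn, E1d hf hn]
    constructor
    · rintro (h | ⟨h1, h2⟩)
      · exact Or.inl h
      · exact Or.inr ⟨fun hh => h1 ((hiff i).mpr hh), h2⟩
    · rintro (h | ⟨h1, h2⟩)
      · exact Or.inl h
      · exact Or.inr ⟨fun hh => h1 ((hiff i).mp hh), h2⟩
  ext i
  rcases lt_trichotomy i (τ i) with h | h | h
  · exact congrArg Fin.val (agreeA he hf hn hiff h)
  · exact absurd h.symm (he.nfix i)
  · -- descending point : use inverses
    set c := τ i with hc
    have hci : τ⁻¹ c = i := by rw [hc]; simp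
    have hcA : c < τ⁻¹ c := by rw [hci]; exact h
    have := agreeA (engInv he) (engInv hf) hn hinviff hcA
    have hvi : υ⁻¹ c = i := by rw [← this, hci]
    have hvc : υ i = c := by
      have := congrArg υ hvi
      exact this.symm.trans (υ.apply_symm_apply c)
    rw [hvc]

end PSBgo
namespace PSBgo

/-- Hypothesis pack for the tour `x(k,s)`. -/
structure XF (n k s : ℕ) (x : Equiv.Perm (Fin n)) : Prop where
  hn : 4 ≤ n
  hev : n % 2 = 0
  hk : k ≤ (n - 2) / 2
  hs : s ≤ (n - 2) / 2
  eng : Eng x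
  hA : ∀ i : Fin n, (i < x i ↔ ((i : ℕ) ≤ k ∨ (n - 1 - s ≤ (i : ℕ) ∧ (i : ℕ) ≤ n - 2)))

variable {n k s : ℕ} {x : Equiv.Perm (Fin n)}

lemma XF.hn0 (hx : XF n k s x) : 0 < n := by have := hx.hn; omega

lemma xTT (hx : XF n k s x) (c : Fin n) :
    TT x c ↔ ((1 ≤ (c : ℕ) ∧ (c : ℕ) ≤ k) ∨ (n - 1 - s ≤ (c : ℕ) ∧ (c : ℕ) ≤ n - 2) ∨
      (c : ℕ) = n - 1) := by
  have hlt := c.isLt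
  have hn := hx.hn; have hk := hx.hk; have hs := hx.hs; have hev := hx.hev
  unfold TT
  rw [hx.hA c]
  constructor
  · rintro (⟨h1, h2⟩ | h1) <;> omega
  · intro h
    omega

lemma xAmem (hx : XF n k s x) {i : Fin n} (h : (i : ℕ) ≤ k ∨ (n - 1 - s ≤ (i : ℕ) ∧ (i : ℕ) ≤ n - 2)) :
    i < x i := (hx.hA i).mpr h

lemma xv1 (hx : XF n k s x) {i : Fin n} (h : (i : ℕ) < k) : (x i : ℕ) = (i : ℕ) + 1 := by
  have hn := hx.hn; have hk := hx.hk; have hs := hx.hs; have hev := hx.hev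
  have hAi : i < x i := xAmem hx (Or.inl (by omega))
  have hlt := i.isLt
  set c : Fin n := ⟨(i : ℕ) + 1, by omega⟩ with hc
  have hcv : (c : ℕ) = (i : ℕ) + 1 := rfl
  have hcT : TT x c := by rw [xTT hx]; omega
  have hle : x i ≤ c := E1c hx.eng hx.hn0 _ i c le_rfl hAi hcT (by rw [Fin.lt_def]; omega)
  have h1 : (i : ℕ) < (x i : ℕ) := hAi
  have h2 : (x i : ℕ) ≤ (i : ℕ) + 1 := hle
  omega

lemma xv2 (hx : XF n k s x) {i : Fin n} (h : (i : ℕ) = k) : (x i : ℕ) = n - 1 - s := by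
  have hn := hx.hn; have hk := hx.hk; have hs := hx.hs; have hev := hx.hev
  have hAi : i < x i := xAmem hx (Or.inl (by omega))
  have hlt := i.isLt
  set c : Fin n := ⟨n - 1 - s, by omega⟩ with hc
  have hcv : (c : ℕ) = n - 1 - s := rfl
  have hcT : TT x c := by rw [xTT hx]; omega
  have hle : x i ≤ c := E1c hx.eng hx.hn0 _ i c le_rfl hAi hcT (by rw [Fin.lt_def]; omega)
  have h1 : (i : ℕ) < (x i : ℕ) := hAi
  have h2 : (x i : ℕ) ≤ n - 1 - s := hle
  have h3 := (xTT hx (x i)).mp (E1a hx.eng hAi)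
  omega

lemma xv3 (hx : XF n k s x) {i : Fin n} (h1 : n - 1 - s ≤ (i : ℕ)) (h2 : (i : ℕ) ≤ n - 2) :
    (x i : ℕ) = (i : ℕ) + 1 := by
  have hn := hx.hn; have hk := hx.hk; have hs := hx.hs; have hev := hx.hev
  have hAi : i < x i := xAmem hx (Or.inr ⟨h1, h2⟩)
  have hlt := i.isLt
  set c : Fin n := ⟨(i : ℕ) + 1, by omega⟩ with hc
  have hcv : (c : ℕ) = (i : ℕ) + 1 := rfl
  have hcT : TT x c := by rw [xTT hx]; omega
  have hle : x i ≤ c := E1c hx.eng hx.hn0 _ i c le_rfl hAi hcT (by rw [Fin.lt_def]; omega)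
  have h3 : (i : ℕ) < (x i : ℕ) := hAi
  have h4 : (x i : ℕ) ≤ (i : ℕ) + 1 := hle
  omega

lemma xAy (hx : XF n k s x) (i : Fin n) :
    i < x⁻¹ i ↔ ((i : ℕ) = 0 ∨ (k + 1 ≤ (i : ℕ) ∧ (i : ℕ) ≤ n - 2 - s)) := by
  have hn := hx.hn; have hk := hx.hk; have hs := hx.hs; have hev := hx.hev
  have hlt := i.isLt
  rw [E1d hx.eng hx.hn0, hx.hA i]
  constructor
  · rintro (h | ⟨h1, h2⟩)
    · exact Or.inl h
    · right; omega
  · intro h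
    rcases Nat.eq_zero_or_pos (i : ℕ) with h0 | h0
    · exact Or.inl h0
    · right; constructor
      · omega
      · omega

lemma yTT (hx : XF n k s x) (c : Fin n) :
    TT x⁻¹ c ↔ ((k + 1 ≤ (c : ℕ) ∧ (c : ℕ) ≤ n - 2 - s) ∨ (c : ℕ) = n - 1) := by
  have hn := hx.hn
  have hlt := c.isLt
  unfold TT
  rw [xAy hx c]
  constructor
  · rintro (⟨h1, h2⟩ | h1) <;> omega
  · intro h; omega

/-- turn a fact about `x⁻¹` into one about `x` -/
lemma inv_val_eq (hx : XF n k s x) {b i : Fin n} (h : x⁻¹ b = i) : x i = b := by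
  rw [Equiv.Perm.inv_eq_iff_eq] at h; exact h.symm

lemma xv6 (hx : XF n k s x) {i : Fin n} (h : (i : ℕ) = k + 1) (h2 : k + 1 ≤ n - 2 - s) :
    (x i : ℕ) = 0 := by
  have hn := hx.hn; have hk := hx.hk; have hs := hx.hs; have hev := hx.hev
  set z : Fin n := ⟨0, hx.hn0⟩ with hz
  have hzv : (z : ℕ) = 0 := rfl
  have hAz : z < x⁻¹ z := (xAy hx z).mpr (Or.inl rfl)
  set c : Fin n := ⟨k + 1, by omega⟩ with hc
  have hcv : (c : ℕ) = k + 1 := rfl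
  have hcT : TT x⁻¹ c := by rw [yTT hx]; omega
  have hle : x⁻¹ z ≤ c := E1c (engInv hx.eng) hx.hn0 _ z c le_rfl hAz hcT (by rw [Fin.lt_def]; omega)
  have h3 := (yTT hx (x⁻¹ z)).mp (E1a (engInv hx.eng) hAz)
  have h4 : (x⁻¹ z : ℕ) ≤ k + 1 := hle
  have h5 : x⁻¹ z = i := by apply Fin.ext; omega
  have := inv_val_eq hx h5
  rw [this]

lemma xv5 (hx : XF n k s x) {i : Fin n} (h1 : k + 2 ≤ (i : ℕ)) (h2 : (i : ℕ) ≤ n - 2 - s) :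
    (x i : ℕ) = (i : ℕ) - 1 := by
  have hn := hx.hn; have hk := hx.hk; have hs := hx.hs; have hev := hx.hev
  have hlt := i.isLt
  set b : Fin n := ⟨(i : ℕ) - 1, by omega⟩ with hb
  have hbv : (b : ℕ) = (i : ℕ) - 1 := rfl
  have hAb : b < x⁻¹ b := (xAy hx b).mpr (Or.inr (by omega))
  have hcT : TT x⁻¹ i := by rw [yTT hx]; omega
  have hle : x⁻¹ b ≤ i := E1c (engInv hx.eng) hx.hn0 _ b i le_rfl hAb hcT (by rw [Fin.lt_def]; omega)
  have h3 : (b : ℕ) < (x⁻¹ b : ℕ) := hAb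
  have h4 : (x⁻¹ b : ℕ) ≤ (i : ℕ) := hle
  have h5 : x⁻¹ b = i := by apply Fin.ext; omega
  have := inv_val_eq hx h5
  rw [this]

lemma xv4a (hx : XF n k s x) {i : Fin n} (h : (i : ℕ) = n - 1) (h2 : k + 1 ≤ n - 2 - s) :
    (x i : ℕ) = n - 2 - s := by
  have hn := hx.hn; have hk := hx.hk; have hs := hx.hs; have hev := hx.hev
  set b : Fin n := ⟨n - 2 - s, by omega⟩ with hb
  have hbv : (b : ℕ) = n - 2 - s := rfl
  have hAb : b < x⁻¹ b := (xAy hx b).mpr (Or.inr (by omega))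
  have h3 := (yTT hx (x⁻¹ b)).mp (E1a (engInv hx.eng) hAb)
  have h4 : (b : ℕ) < (x⁻¹ b : ℕ) := hAb
  have h5 : x⁻¹ b = i := by apply Fin.ext; omega
  have := inv_val_eq hx h5
  rw [this]

lemma xv4b (hx : XF n k s x) {i : Fin n} (h : (i : ℕ) = n - 1) (h2 : ¬ k + 1 ≤ n - 2 - s) :
    (x i : ℕ) = 0 := by
  have hn := hx.hn; have hk := hx.hk; have hs := hx.hs; have hev := hx.hev
  set z : Fin n := ⟨0, hx.hn0⟩ with hz
  have hzv : (z : ℕ) = 0 := rfl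
  have hAz : z < x⁻¹ z := (xAy hx z).mpr (Or.inl rfl)
  have h3 := (yTT hx (x⁻¹ z)).mp (E1a (engInv hx.eng) hAz)
  have h5 : x⁻¹ z = i := by apply Fin.ext; omega
  have := inv_val_eq hx h5
  rw [this]

/-- classification of ascending values -/
lemma xUP (hx : XF n k s x) {i : Fin n} (h : i < x i) :
    ((i : ℕ) < k ∧ (x i : ℕ) = (i : ℕ) + 1) ∨ ((i : ℕ) = k ∧ (x i : ℕ) = n - 1 - s) ∨
    (n - 1 - s ≤ (i : ℕ) ∧ (i : ℕ) ≤ n - 2 ∧ (x i : ℕ) = (i : ℕ) + 1) := by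
  rcases (hx.hA i).mp h with h1 | ⟨h1, h2⟩
  · rcases Nat.lt_or_ge (i : ℕ) k with h2 | h2
    · exact Or.inl ⟨h2, xv1 hx h2⟩
    · have : (i : ℕ) = k := by omega
      exact Or.inr (Or.inl ⟨this, xv2 hx this⟩)
  · exact Or.inr (Or.inr ⟨h1, h2, xv3 hx h1 h2⟩)

/-- a jump up by at least 2 only happens at `k` -/
lemma xUP2 (hx : XF n k s x) {i : Fin n} (h : (i : ℕ) + 2 ≤ (x i : ℕ)) :
    (i : ℕ) = k ∧ (x i : ℕ) = n - 1 - s := by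
  have hup : i < x i := by rw [Fin.lt_def]; omega
  rcases xUP hx hup with ⟨_, h2⟩ | ⟨h1, h2⟩ | ⟨_, _, h2⟩
  · omega
  · exact ⟨h1, h2⟩
  · omega

/-- a jump down by at least 2 only happens at `k+1 → 0` or from the top -/
lemma xDOWN2 (hx : XF n k s x) {i : Fin n} (h : (x i : ℕ) + 2 ≤ (i : ℕ)) :
    ((i : ℕ) = k + 1 ∧ (x i : ℕ) = 0 ∧ k + 1 ≤ n - 2 - s) ∨ ((i : ℕ) = n - 1) := by
  have hn := hx.hn; have hk := hx.hk; have hs := hx.hs; have hev := hx.hev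
  have hlt := i.isLt
  have hcov : (i : ℕ) < k ∨ (i : ℕ) = k ∨ ((i : ℕ) = k + 1 ∧ k + 1 ≤ n - 2 - s) ∨
      ((i : ℕ) = k + 1 ∧ ¬ k + 1 ≤ n - 2 - s) ∨ (k + 2 ≤ (i : ℕ) ∧ (i : ℕ) ≤ n - 2 - s) ∨
      (n - 1 - s ≤ (i : ℕ) ∧ (i : ℕ) ≤ n - 2) ∨ (i : ℕ) = n - 1 := by omega
  rcases hcov with h1 | h1 | ⟨h1, h2⟩ | ⟨h1, h2⟩ | ⟨h1, h2⟩ | ⟨h1, h2⟩ | h1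
  · have := xv1 hx h1; omega
  · have := xv2 hx h1; omega
  · exact Or.inl ⟨h1, xv6 hx h1 h2, h2⟩
  · have h3 : n - 1 - s ≤ (i : ℕ) := by omega
    have h4 : (i : ℕ) ≤ n - 2 := by omega
    have := xv3 hx h3 h4; omega
  · have := xv5 hx h1 h2; omega
  · have := xv3 hx h1 h2; omega
  · exact Or.inr h1

end PSBgo
namespace PSBgo

variable {n k s k' s' : ℕ} {x x' π : Equiv.Perm (Fin n)}

lemma ascHalf (hx : XF n k s x) (hx' : XF n k' s' x')
    (hopt : ∀ i, π i = x i ∨ π i = x' i) (i : Fin n)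
    (h1 : π⁻¹ i < i) (h2 : (π i : ℕ) + 1 = (i : ℕ)) (h3 : i < π (π i))
    (hjump : π (π i) = x (π i)) : False := by
  have hn := hx.hn; have hk := hx.hk; have hs := hx.hs; have hev := hx.hev
  have hk' := hx'.hk; have hs' := hx'.hs
  have hlt := i.isLt
  have hgv : (π i : ℕ) + 2 ≤ (x (π i) : ℕ) := by
    rw [← hjump]
    have h3' : (i : ℕ) < (π (π i) : ℕ) := h3
    omega
  obtain ⟨hgk, hgx⟩ := xUP2 hx hgv
  have hiv : (i : ℕ) = k + 1 := by omega
  have hjv : (π (π i) : ℕ) = n - 1 - s := by rw [hjump]; exact hgx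
  have hjge : k + 2 ≤ n - 1 - s := by omega
  rcases Nat.eq_zero_or_pos k with hk0 | hk0
  · have hav : (π⁻¹ i : ℕ) = (π i : ℕ) := by
      have h1' : (π⁻¹ i : ℕ) < (i : ℕ) := h1
      omega
    have he1 : π⁻¹ i = π i := Fin.ext hav
    have he2 : π (π i) = i := by rw [← he1]; exact π.apply_symm_apply i
    rw [he2] at hjv
    omega
  · have hxi : (x i : ℕ) = 0 := xv6 hx hiv (by omega)
    have hpix' : π i = x' i := by
      rcases hopt i with h | h
      · exfalso; rw [h] at hgk; omega
      · exact h
    have hx'iv : (x' i : ℕ) = k := by rw [← hpix']; exact hgk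
    have hcov : k + 1 < k' ∨ k + 1 = k' ∨ k = k' ∨
        (k' + 2 ≤ k + 1 ∧ k + 1 ≤ n - 2 - s') ∨
        (n - 1 - s' ≤ k + 1 ∧ k + 1 ≤ n - 2) ∨ k + 1 = n - 1 := by omega
    rcases hcov with hc | hc | hc | ⟨hc1, hc2⟩ | ⟨hc1, hc2⟩ | hc
    · have := xv1 hx' (show (i : ℕ) < k' by omega); omega
    · have := xv2 hx' (show (i : ℕ) = k' by omega); omega
    · by_cases hcc : k' + 1 ≤ n - 2 - s'
      · have := xv6 hx' (show (i : ℕ) = k' + 1 by omega) hcc; omega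
      · have := xv3 hx' (i := i) (by omega) (by omega); omega
    · -- main live branch : k ≥ k'+1, k+1 ≤ n-2-s'
      set a := π⁻¹ i with ha
      have hai : π a = i := π.apply_symm_apply i
      have hav : (a : ℕ) ≤ k := by
        have h1' : (a : ℕ) < (i : ℕ) := h1
        omega
      have hpav : (π a : ℕ) = k + 1 := by rw [hai]; exact hiv
      rcases hopt a with hxa | hxa
      · rcases Nat.lt_or_ge (a : ℕ) k with hak | hak
        · have := xv1 hx hak; rw [← hxa] at this; omega
        · have := xv2 hx (show (a : ℕ) = k by omega); rw [← hxa] at this; omega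
      · have hcov2 : (a : ℕ) < k' ∨ (a : ℕ) = k' ∨ (a : ℕ) = k' + 1 ∨
            (k' + 2 ≤ (a : ℕ) ∧ (a : ℕ) ≤ n - 2 - s') := by omega
        rcases hcov2 with hc2' | hc2' | hc2' | ⟨hc2a, hc2b⟩
        · have := xv1 hx' hc2'; rw [← hxa] at this; omega
        · have := xv2 hx' hc2'; rw [← hxa] at this; omega
        · have := xv6 hx' hc2' (by omega); rw [← hxa] at this; omega
        · have := xv5 hx' hc2a hc2b; rw [← hxa] at this; omega
    · have := xv3 hx' (i := i) (by omega) (by omega); omega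
    · omega

lemma descHalf (hx : XF n k s x) (hx' : XF n k' s' x')
    (hopt : ∀ i, π i = x i ∨ π i = x' i) (i : Fin n)
    (h1 : i < π⁻¹ (π⁻¹ i)) (h2 : (π⁻¹ i : ℕ) + 1 = (i : ℕ)) (h3 : π i < i)
    (hjump : π (π⁻¹ (π⁻¹ i)) = x (π⁻¹ (π⁻¹ i))) : False := by
  have hn := hx.hn; have hk := hx.hk; have hs := hx.hs; have hev := hx.hev
  have hk' := hx'.hk; have hs' := hx'.hs
  have hlt := i.isLt
  set b := π⁻¹ i with hb
  set j := π⁻¹ b with hj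
  have hjlt := j.isLt
  have hjb : π j = b := π.apply_symm_apply b
  have hij : (i : ℕ) < (j : ℕ) := h1
  have hjbv : (π j : ℕ) = (b : ℕ) := congrArg Fin.val hjb
  have hdown : (x j : ℕ) + 2 ≤ (j : ℕ) := by
    rw [← hjump]; omega
  have hpb : π b = i := π.apply_symm_apply i
  have hpbv : (π b : ℕ) = (i : ℕ) := congrArg Fin.val hpb
  -- helper : if x j = 0 then contradiction
  have hzero : (x j : ℕ) = 0 → False := by
    intro h0
    have hbv : (b : ℕ) = 0 := by rw [← hjump] at h0; omega
    have hiv : (i : ℕ) = 1 := by omega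
    have hpiv : (π i : ℕ) = 0 := by
      have h3' : (π i : ℕ) < (i : ℕ) := h3
      omega
    have : π i = π j := Fin.ext (by omega)
    have := π.injective this
    rw [this] at hij
    omega
  rcases xDOWN2 hx hdown with ⟨hjk, hx0, hreg⟩ | hjn
  · exact hzero hx0
  · by_cases hreg : k + 1 ≤ n - 2 - s
    · have hxj : (x j : ℕ) = n - 2 - s := xv4a hx hjn hreg
      have hbv : (b : ℕ) = n - 2 - s := by rw [← hjump] at hxj; omega
      have hiv : (i : ℕ) = n - 1 - s := by omega
      have hs1 : 1 ≤ s := by omega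
      -- kill-block via h3 at i (value n-1-s ≤ n-2)
      have hkill : False → False := id
      have hup : (π i : ℕ) < (i : ℕ) := h3
      have hkill2 : False := by
        clear hkill
        -- first show π b = i forces s' ≥ s with x' suffix edge or s' = s with k' edge,
        -- in both cases π i would be ascending, contradiction
        rcases hopt b with hcb | hcb
        · -- x-edge into i : impossible
          rcases Nat.lt_or_ge (k + 1) (b : ℕ) with hbk | hbk
          · have := xv5 hx (i := b) (by omega) (by omega)
            rw [← hcb] at this; omega
          · have := xv6 hx (show (b : ℕ) = k + 1 by omega) hreg
            rw [← hcb] at this; omega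
        · have hx'b : (x' b : ℕ) = n - 1 - s := by rw [← hcb]; omega
          have hcovb : (b : ℕ) = k' ∨ ((b : ℕ) = k' + 1 ∧ k' + 1 ≤ n - 2 - s') ∨
              (k' + 2 ≤ (b : ℕ) ∧ (b : ℕ) ≤ n - 2 - s') ∨
              (n - 1 - s' ≤ (b : ℕ) ∧ (b : ℕ) ≤ n - 2) ∨ (b : ℕ) = n - 1 := by omega
          have hsfx : n - 1 - s' ≤ (i : ℕ) → False := by
            intro hs'i
            rcases hopt i with hci | hci
            · have := xv3 hx (i := i) (by omega) (by omega); omega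
            · have := xv3 hx' (i := i) (by omega) (by omega); omega
          rcases hcovb with hcb' | ⟨hcb1, hcb2⟩ | ⟨hcb1, hcb2⟩ | ⟨hcb1, hcb2⟩ | hcb'
          · have := xv2 hx' hcb'
            -- n-1-s' = n-1-s hence s' = s, then i is in both suffixes
            exact hsfx (by omega)
          · have := xv6 hx' hcb1 hcb2; omega
          · have := xv5 hx' hcb1 hcb2; omega
          · exact hsfx (by omega)
          · omega
      exact hkill2
    · exact hzero (xv4b hx hjn hreg)

/-- No permutation inside the union of the two tours has any step-back peak. -/
lemma noSB (hx : XF n k s x) (hx' : XF n k' s' x')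
    (hopt : ∀ i, π i = x i ∨ π i = x' i) (i : Fin n) : ¬ IsStepBackPeak π i := by
  rintro (⟨h1, h2, h3⟩ | ⟨h1, h2, h3⟩)
  · rcases hopt (π i) with hj | hj
    · exact ascHalf hx hx' hopt i h1 h2 h3 hj
    · exact ascHalf hx' hx (fun i => (hopt i).symm) i h1 h2 h3 hj
  · rcases hopt (π⁻¹ (π⁻¹ i)) with hj | hj
    · exact descHalf hx hx' hopt i h1 h2 h3 hj
    · exact descHalf hx' hx (fun i => (hopt i).symm) i h1 h2 h3 hj

end PSBgo
namespace PSBgo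

variable {n k s k' s' : ℕ} {x x' π : Equiv.Perm (Fin n)}

/-- If all of `[0,n-2]` ascends and the ascent set of `x` is also everything below `n-1`,
then `π = x`. -/
lemma detFull (hx : XF n k s x) (heπ : Eng π)
    (hall : ∀ i : Fin n, (i : ℕ) ≤ n - 2 → i < π i)
    (hks : n - 1 - s = k + 1) : π = x := by
  have hn := hx.hn; have hk := hx.hk; have hs := hx.hs; have hev := hx.hev
  apply DET heπ hx.eng hx.hn0
  intro i
  have hlt := i.isLt
  constructor
  · intro h
    apply (hx.hA i).mpr
    have hin : (i : ℕ) ≤ n - 2 := by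
      by_contra hc
      have hiv : (i : ℕ) + 1 = n := by omega
      exact absurd h (not_lt.mpr (le_of_lt (heπ.lastd i hiv)))
    omega
  · intro h
    rcases (hx.hA i).mp h with h1 | ⟨h1, h2⟩
    · exact hall i (by omega)
    · exact hall i h2

/-- Main branch : `π` jumps at `k` with value `n-1-s`; then `π = x`. -/
lemma branchB3 (hx : XF n k s x) (hx' : XF n k' s' x') (heπ : Eng π)
    (hpkπ : ∀ i : Fin n, π⁻¹ i < i → π i < i → (i : ℕ) + 1 = n)
    (hopt : ∀ i, π i = x i ∨ π i = x' i)
    (kF : Fin n) (hkF : (kF : ℕ) = k)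
    (hjump : (π kF : ℕ) = n - 1 - s)
    (hpre : ∀ b : Fin n, (b : ℕ) ≤ k → b < π b) :
    π = x := by
  have hn := hx.hn; have hk := hx.hk; have hs := hx.hs; have hev := hx.hev
  have hk' := hx'.hk; have hs' := hx'.hs
  have hn0 := hx.hn0
  have hkA : kF < π kF := hpre kF (le_of_eq hkF)
  -- minimality consequence
  have hstar : ∀ a : Fin n, a < π a → (a : ℕ) ≠ 0 → k < (a : ℕ) → n - 1 - s ≤ (a : ℕ) := by
    intro a ha h0 hka
    have haT : TT π a := Or.inl ⟨ha, h0⟩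
    have hlt2 : kF < a := by rw [Fin.lt_def]; omega
    have := E1c heπ hn0 _ kF a le_rfl hkA haT hlt2
    have hle : (π kF : ℕ) ≤ (a : ℕ) := this
    omega
  -- the suffix ascends with steps +1
  have hsfx : ∀ m : ℕ, ∀ j : Fin n, (j : ℕ) ≤ m → n - 1 - s ≤ (j : ℕ) → (j : ℕ) ≤ n - 2 →
      j < π j ∧ (π j : ℕ) = (j : ℕ) + 1 := by
    intro m
    induction m with
    | zero => intro j h0 h1 h2; omega
    | succ m ih =>
      intro j hjm h1 h2
      have hlt := j.isLt
      have hjA : π⁻¹ j < j := by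
        by_cases hj0 : (j : ℕ) = n - 1 - s
        · have hpj : π kF = j := Fin.ext (by omega)
          have : π⁻¹ j = kF := by rw [Equiv.Perm.inv_eq_iff_eq]; exact hpj.symm
          rw [this, Fin.lt_def]; omega
        · set j' : Fin n := ⟨(j : ℕ) - 1, by omega⟩ with hj'
          have hj'v : (j' : ℕ) = (j : ℕ) - 1 := rfl
          obtain ⟨_, hval⟩ := ih j' (by omega) (by omega) (by omega)
          have hpj : π j' = j := Fin.ext (by omega)
          have : π⁻¹ j = j' := by rw [Equiv.Perm.inv_eq_iff_eq]; exact hpj.symm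
          rw [this, Fin.lt_def]; omega
      have hjup : j < π j := by
        rcases lt_trichotomy j (π j) with h | h | h
        · exact h
        · exact absurd h.symm (heπ.nfix j)
        · have := hpkπ j hjA h; omega
      refine ⟨hjup, ?_⟩
      rcases hopt j with hc | hc
      · rw [hc]; exact xv3 hx h1 h2
      · rw [hc] at hjup ⊢
        rcases xUP hx' hjup with ⟨hc1, _⟩ | ⟨hc1, _⟩ | ⟨_, _, hc3⟩
        · omega
        · omega
        · exact hc3
  -- ascent sets coincide
  apply DET heπ hx.eng hn0
  intro i
  have hlt := i.isLt
  constructor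
  · intro h
    apply (hx.hA i).mpr
    by_cases hik : (i : ℕ) ≤ k
    · exact Or.inl hik
    · right
      have hin : (i : ℕ) ≤ n - 2 := by
        by_contra hc
        have hiv : (i : ℕ) + 1 = n := by omega
        exact absurd h (not_lt.mpr (le_of_lt (heπ.lastd i hiv)))
      exact ⟨hstar i h (by omega) (by omega), hin⟩
  · intro h
    rcases (hx.hA i).mp h with h1 | ⟨h1, h2⟩
    · exact hpre i h1
    · exact (hsfx (i : ℕ) i le_rfl h1 h2).1

/-- Any engine permutation with unique peak at the top, inside the union, is one of the tours. -/
lemma P3core (hx : XF n k s x) (hx' : XF n k' s' x') (heπ : Eng π)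
    (hpkπ : ∀ i : Fin n, π⁻¹ i < i → π i < i → (i : ℕ) + 1 = n)
    (hopt : ∀ i, π i = x i ∨ π i = x' i) :
    π = x ∨ π = x' := by
  classical
  have hn := hx.hn; have hk := hx.hk; have hs := hx.hs; have hev := hx.hev
  have hk' := hx'.hk; have hs' := hx'.hs
  have hn0 := hx.hn0
  set P : Finset (Fin n) := Finset.univ.filter (fun a => ¬ a < π a) with hP
  have hmemP : ∀ a : Fin n, a ∈ P ↔ ¬ a < π a := by intro a; simp [hP]
  obtain ⟨lst, hlstv⟩ : ∃ l : Fin n, (l : ℕ) = n - 1 := ⟨⟨n - 1, by omega⟩, rfl⟩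
  have hlstP : lst ∈ P := by
    rw [hmemP]
    exact not_lt.mpr (le_of_lt (heπ.lastd lst (by omega)))
  obtain ⟨M, hMP, hMmin⟩ : ∃ M ∈ P, ∀ b ∈ P, M ≤ b :=
    ⟨P.min' ⟨lst, hlstP⟩, Finset.min'_mem _ _, fun b hb => Finset.min'_le P b hb⟩
  have hMna : ¬ M < π M := (hmemP M).mp hMP
  have hbelow : ∀ b : Fin n, b < M → b < π b := by
    intro b hb
    by_contra hc
    exact absurd (hMmin b ((hmemP b).mpr hc)) (not_le.mpr hb)
  have hM1 : 1 ≤ (M : ℕ) := by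
    rcases Nat.eq_zero_or_pos (M : ℕ) with h0 | h0
    · exfalso
      apply hMna
      rw [Fin.lt_def]
      have hne := heπ.nfix M
      have : (π M : ℕ) ≠ (M : ℕ) := fun hh => hne (Fin.ext hh)
      omega
    · exact h0
  have hMlt := M.isLt
  obtain ⟨κ, hκv⟩ : ∃ κ : Fin n, (κ : ℕ) = (M : ℕ) - 1 := ⟨⟨(M : ℕ) - 1, by omega⟩, rfl⟩
  have hκA : κ < π κ := hbelow κ (by rw [Fin.lt_def]; omega)
  by_cases hδ : (π κ : ℕ) = (κ : ℕ) + 1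
  · -- π κ = M is a peak, so M = n-1 and everything below ascends
    have hπκ : π κ = M := Fin.ext (by omega)
    have hMA : π⁻¹ M < M := by
      have : π⁻¹ M = κ := by rw [Equiv.Perm.inv_eq_iff_eq]; exact hπκ.symm
      rw [this, Fin.lt_def]; omega
    have hMd : π M < M := by
      rcases lt_trichotomy (π M) M with h | h | h
      · exact h
      · exact absurd h (heπ.nfix M)
      · exact absurd h hMna
    have hMn : (M : ℕ) + 1 = n := hpkπ M hMA hMd
    have hall : ∀ i : Fin n, (i : ℕ) ≤ n - 2 → i < π i := by
      intro i hi
      exact hbelow i (by rw [Fin.lt_def]; omega)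
    obtain ⟨kF, hkFv⟩ : ∃ kF : Fin n, (kF : ℕ) = k := ⟨⟨k, by omega⟩, rfl⟩
    have hkA : kF < π kF := hall kF (by omega)
    obtain ⟨c, hcv⟩ : ∃ c : Fin n, (c : ℕ) = k + 1 := ⟨⟨k + 1, by omega⟩, rfl⟩
    have hcT : TT π c := Or.inl ⟨hall c (by omega), by omega⟩
    have hb0 : π kF ≤ c := E1c heπ hn0 _ kF c le_rfl hkA hcT (by rw [Fin.lt_def]; omega)
    have hb1 : (π kF : ℕ) ≤ k + 1 := by rw [Fin.le_def] at hb0; omega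
    have hπk : (π kF : ℕ) = k + 1 := by
      have : (kF : ℕ) < (π kF : ℕ) := hkA
      omega
    rcases hopt kF with hcx | hcx
    · rw [hcx] at hkA hπk
      rcases xUP hx hkA with ⟨hc1, _⟩ | ⟨_, hc2⟩ | ⟨hc1, _, _⟩
      · omega
      · exact Or.inl (detFull hx heπ hall (by omega))
      · omega
    · rw [hcx] at hkA hπk
      rcases xUP hx' hkA with ⟨hc1, _⟩ | ⟨hc1, hc2⟩ | ⟨hc1, _, _⟩
      · -- k < k' : look at k'
        obtain ⟨kF', hkFv'⟩ : ∃ kF' : Fin n, (kF' : ℕ) = k' := ⟨⟨k', by omega⟩, rfl⟩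
        have hkA' : kF' < π kF' := hall kF' (by omega)
        obtain ⟨c', hcv'⟩ : ∃ c' : Fin n, (c' : ℕ) = k' + 1 := ⟨⟨k' + 1, by omega⟩, rfl⟩
        have hcT' : TT π c' := Or.inl ⟨hall c' (by omega), by omega⟩
        have hb0' : π kF' ≤ c' :=
          E1c heπ hn0 _ kF' c' le_rfl hkA' hcT' (by rw [Fin.lt_def]; omega)
        have hb1' : (π kF' : ℕ) ≤ k' + 1 := by rw [Fin.le_def] at hb0'; omega
        have hπk' : (π kF' : ℕ) = k' + 1 := by
          have : (kF' : ℕ) < (π kF' : ℕ) := hkA'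
          omega
        rcases hopt kF' with hcy | hcy
        · rw [hcy] at hkA' hπk'
          rcases xUP hx hkA' with ⟨hd1, _⟩ | ⟨hd1, hd2⟩ | ⟨hd1, _, _⟩
          · omega
          · omega
          · omega
        · rw [hcy] at hkA' hπk'
          rcases xUP hx' hkA' with ⟨hd1, _⟩ | ⟨_, hd2⟩ | ⟨hd1, _, _⟩
          · omega
          · exact Or.inr (detFull hx' heπ hall (by omega))
          · omega
      · exact Or.inr (detFull hx' heπ hall (by omega))
      · omega
  · -- genuine jump at κ
    have hκup : (κ : ℕ) + 2 ≤ (π κ : ℕ) := by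
      have : (κ : ℕ) < (π κ : ℕ) := hκA
      omega
    have hpre : ∀ t : ℕ, t = (κ : ℕ) → ∀ b : Fin n, (b : ℕ) ≤ t → b < π b := by
      rintro t rfl b hb
      exact hbelow b (by rw [Fin.lt_def]; omega)
    rcases hopt κ with hcx | hcx
    · obtain ⟨he1, he2⟩ := xUP2 hx (by rw [← hcx]; exact hκup)
      exact Or.inl (branchB3 hx hx' heπ hpkπ hopt κ he1 (by rw [hcx]; exact he2)
        (hpre _ he1.symm))
    · obtain ⟨he1, he2⟩ := xUP2 hx' (by rw [← hcx]; exact hκup)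
      exact Or.inr (branchB3 hx' hx heπ hpkπ (fun i => (hopt i).symm) κ he1
        (by rw [hcx]; exact he2) (hpre _ he1.symm))

end PSBgo
namespace PSBgo

variable {n k s k' s' : ℕ} {x x' π τ : Equiv.Perm (Fin n)}

lemma tour_nfix (h4 : 2 ≤ n) (ht : IsTour τ) (i : Fin n) : τ i ≠ i := by
  intro hfix
  have hpow : ∀ m : ℕ, (τ ^ m) i = i := by
    intro m
    induction m with
    | zero => rfl
    | succ m ih => rw [pow_succ, Equiv.Perm.mul_apply, hfix, ih]
  have hlt := i.isLt
  obtain ⟨j, hjv⟩ : ∃ j : Fin n, (j : ℕ) = ((i : ℕ) + 1) % n :=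
    ⟨⟨((i : ℕ) + 1) % n, Nat.mod_lt _ (by omega)⟩, rfl⟩
  obtain ⟨m, hm⟩ := ht i j
  rw [hpow m] at hm
  have : (i : ℕ) = (j : ℕ) := congrArg Fin.val hm
  rw [hjv] at this
  rcases Nat.lt_or_ge ((i : ℕ) + 1) n with h | h
  · rw [Nat.mod_eq_of_lt h] at this; omega
  · have hin : (i : ℕ) + 1 = n := by omega
    rw [hin, Nat.mod_self] at this; omega

lemma psb_eng (h4 : 4 ≤ n) (hpsb : IsPSB τ) (hnosb : ∀ i, ¬ IsStepBackPeak τ i) :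
    Eng τ where
  nfix := tour_nfix (by omega) hpsb.1
  npeak i hi hinv := by
    rcases lt_trichotomy i (τ i) with h | h | h
    · exact h
    · exact absurd h.symm (tour_nfix (by omega) hpsb.1 i)
    · exfalso
      have := (hpsb.2 i).mp ⟨⟨hinv, h⟩, hnosb i⟩
      omega
  lastd i hi := ((hpsb.2 i).mpr (by omega)).1.2
  lastd' i hi := ((hpsb.2 i).mpr (by omega)).1.1

lemma mkXF (h4 : 4 ≤ n) (hev : n % 2 = 0) (hk : k ≤ (n - 2) / 2) (hs : s ≤ (n - 2) / 2)
    (hpsb : IsPSB x) (hnosb : ∀ i, ¬ IsStepBackPeak x i)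
    (hasc : ∀ i : Fin n, 1 ≤ (i : ℕ) → (i : ℕ) ≤ n - 2 →
      (i < x i ↔ ((i : ℕ) ≤ k ∨ n - 1 - s ≤ (i : ℕ)))) : XF n k s x where
  hn := h4
  hev := hev
  hk := hk
  hs := hs
  eng := psb_eng h4 hpsb hnosb
  hA := by
    intro i
    have hlt := i.isLt
    have heng := psb_eng h4 hpsb hnosb
    rcases Nat.eq_zero_or_pos (i : ℕ) with h0 | h0
    · constructor
      · intro _; exact Or.inl (by omega)
      · intro _
        rw [Fin.lt_def]
        have hne := heng.nfix i
        have : (x i : ℕ) ≠ (i : ℕ) := fun hh => hne (Fin.ext hh)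
        omega
    · rcases Nat.lt_or_ge (i : ℕ) (n - 1) with h1 | h1
      · rw [hasc i h0 (by omega)]
        constructor
        · intro h
          rcases h with h | h
          · exact Or.inl h
          · exact Or.inr ⟨h, by omega⟩
        · intro h
          rcases h with h | ⟨h, _⟩
          · exact Or.inl h
          · exact Or.inr h
      · have hiv : (i : ℕ) + 1 = n := by omega
        constructor
        · intro h
          exact absurd h (not_lt.mpr (le_of_lt (heng.lastd i hiv)))
        · intro h
          exfalso
          rcases h with h | ⟨_, h⟩ <;> omega
  
/-- Final combinatorial core : a PSB tour inside the union is one of the two tours. -/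
lemma P3 (hx : XF n k s x) (hx' : XF n k' s' x') (hψ : IsPSB π)
    (hopt : ∀ i, π i = x i ∨ π i = x' i) : π = x ∨ π = x' := by
  have hnos := noSB hx hx' hopt
  have heπ := psb_eng hx.hn hψ hnos
  have hpkπ : ∀ i : Fin n, π⁻¹ i < i → π i < i → (i : ℕ) + 1 = n := by
    intro i h1 h2
    have := (hψ.2 i).mp ⟨⟨h1, h2⟩, hnos i⟩
    have hlt := i.isLt
    have := hx.hn
    omega
  exact P3core hx hx' heπ hpkπ hopt

/-- distinctness -/
lemma xdistinct (hx : XF n k s x) (hx' : XF n k' s' x') (hne : (k, s) ≠ (k', s')) :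
    x ≠ x' := by
  have hn := hx.hn; have hk := hx.hk; have hs := hx.hs; have hev := hx.hev
  have hk' := hx'.hk; have hs' := hx'.hs
  intro heq
  apply hne
  obtain ⟨kF, hkFv⟩ : ∃ kF : Fin n, (kF : ℕ) = k := ⟨⟨k, by omega⟩, rfl⟩
  obtain ⟨kF', hkFv'⟩ : ∃ c : Fin n, (c : ℕ) = k' := ⟨⟨k', by omega⟩, rfl⟩
  have h1 : (x kF : ℕ) = n - 1 - s := xv2 hx hkFv
  have h2 : (x kF : ℕ) = (x' kF : ℕ) := by rw [heq]
  have h4 : (x kF' : ℕ) = (x' kF' : ℕ) := by rw [heq]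
  have h3 : (x' kF' : ℕ) = n - 1 - s' := xv2 hx' hkFv'
  -- first, k = k'
  have hkk : k = k' := by
    by_contra hkk
    rcases Nat.lt_or_ge k k' with h | h
    · -- x' kF = k+1 (prefix of x'), but x kF = n-1-s ≥ (n-2)/2+1 > k+1 unless ...
      have := xv1 hx' (show (kF : ℕ) < k' by omega)
      omega
    · have hkk' : k' < k := by omega
      have := xv1 hx (show (kF' : ℕ) < k by omega)
      omega
  subst hkk
  have : s = s' := by
    have h5 : kF = kF' := Fin.ext (by omega)
    rw [h5] at h1 h2
    omega
  rw [this]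

end PSBgo
namespace PSBgo

variable {n : ℕ}

/-- the counting functional -/
def fW (W : Finset (Fin n × Fin n)) : (Fin n × Fin n → ℝ) →ₗ[ℝ] ℝ where
  toFun p := ∑ e ∈ W, p e
  map_add' p q := by simp [Finset.sum_add_distrib]
  map_smul' c p := by simp [Finset.mul_sum]

lemma fW_chv (W : Finset (Fin n × Fin n)) (τ : Equiv.Perm (Fin n)) :
    fW W (chv τ) = ((W.filter (fun e => τ e.1 = e.2)).card : ℝ) := by
  show (∑ e ∈ W, chv τ e) = _
  unfold chv
  rw [Finset.sum_boole]

/-- the union edge set of two permutations -/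
def unionW (x x' : Equiv.Perm (Fin n)) : Finset (Fin n × Fin n) :=
  Finset.univ.filter (fun e => x e.1 = e.2 ∨ x' e.1 = e.2)

lemma card_unionW_filter (x x' τ : Equiv.Perm (Fin n)) :
    ((unionW x x').filter (fun e => τ e.1 = e.2)).card =
      (Finset.univ.filter (fun i : Fin n => x i = τ i ∨ x' i = τ i)).card := by
  symm
  apply Finset.card_bij (fun i _ => (i, τ i))
  · intro i hi
    simp only [Finset.mem_filter, Finset.mem_univ, true_and] at hi
    refine Finset.mem_filter.mpr ⟨Finset.mem_filter.mpr ⟨Finset.mem_univ _, ?_⟩, rfl⟩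
    exact hi
  · intro i _ j _ h
    exact congrArg Prod.fst h
  · intro e he
    simp only [unionW, Finset.mem_filter, Finset.mem_univ, true_and] at he
    obtain ⟨h1, h2⟩ := he
    refine ⟨e.1, ?_, ?_⟩
    · simp only [Finset.mem_filter, Finset.mem_univ, true_and]
      rw [← h2] at h1; exact h1
    · exact Prod.ext rfl h2

lemma fW_chv_le (x x' τ : Equiv.Perm (Fin n)) :
    fW (unionW x x') (chv τ) ≤ (n : ℝ) := by
  rw [fW_chv, card_unionW_filter]
  have := Finset.card_filter_le (Finset.univ : Finset (Fin n))
    (fun i : Fin n => x i = τ i ∨ x' i = τ i)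
  have hc : (Finset.univ : Finset (Fin n)).card = n := by simp
  exact_mod_cast le_trans this (le_of_eq hc)

lemma fW_chv_eq_iff (x x' τ : Equiv.Perm (Fin n)) :
    fW (unionW x x') (chv τ) = (n : ℝ) ↔ ∀ i, x i = τ i ∨ x' i = τ i := by
  rw [fW_chv, card_unionW_filter]
  rw [show ((n : ℝ) = ((n : ℕ) : ℝ)) from by norm_num]
  rw [Nat.cast_inj]
  constructor
  · intro h i
    have huniv : (Finset.univ.filter (fun i : Fin n => x i = τ i ∨ x' i = τ i)) =
        Finset.univ := by
      apply Finset.eq_univ_of_card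
      rw [h]; simp
    have := Finset.mem_univ i
    rw [← huniv, Finset.mem_filter] at this
    exact this.2
  · intro h
    have : (Finset.univ.filter (fun i : Fin n => x i = τ i ∨ x' i = τ i)) = Finset.univ := by
      apply Finset.filter_true_of_mem
      intro i _; exact h i
    rw [this]; simp

lemma fW_self (x x' : Equiv.Perm (Fin n)) : fW (unionW x x') (chv x) = (n : ℝ) :=
  (fW_chv_eq_iff x x' x).mpr (fun i => Or.inl rfl)

lemma fW_self' (x x' : Equiv.Perm (Fin n)) : fW (unionW x x') (chv x') = (n : ℝ) :=
  (fW_chv_eq_iff x x' x').mpr (fun i => Or.inr rfl)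

lemma chv_injective : Function.Injective (chv (n := n)) := by
  intro σ τ h
  ext i
  have := congrFun h (i, σ i)
  unfold chv at this
  simp only [if_pos rfl] at this
  by_contra hne
  have hne' : ¬ τ i = σ i := fun hh => hne (congrArg Fin.val hh.symm)
  rw [if_neg hne'] at this
  norm_num at this

/-- general adjacency criterion via an exposing functional -/
lemma adj_general {u w : Fin n × Fin n → ℝ} {S : Set (Fin n × Fin n → ℝ)}
    (f : (Fin n × Fin n → ℝ) →ₗ[ℝ] ℝ) (c : ℝ)
    (hu : u ∈ S) (hw : w ∈ S) (hne : u ≠ w)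
    (hle : ∀ v ∈ S, f v ≤ c) (hfu : f u = c) (hfw : f w = c)
    (heq : ∀ v ∈ S, f v = c → v = u ∨ v = w) (hfin : S.Finite) :
    AdjacentIn S u w := by
  classical
  refine ⟨hne, ?_⟩
  have huh : u ∈ convexHull ℝ S := subset_convexHull ℝ S hu
  have hwh : w ∈ convexHull ℝ S := subset_convexHull ℝ S hw
  have hhull : ∀ p ∈ convexHull ℝ S, f p ≤ c := by
    intro p hp
    have hsub : convexHull ℝ S ⊆ {q | f q ≤ c} :=
      convexHull_min (fun v hv => hle v hv) (convex_halfSpace_le ⟨f.map_add, f.map_smul⟩ c)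
    exact hsub hp
  have hseg : segment ℝ u w = {p ∈ convexHull ℝ S | ∀ q ∈ convexHull ℝ S, f q ≤ f p} := by
    ext p
    constructor
    · intro hp
      obtain ⟨a, b, ha, hb, hab, rfl⟩ := hp
      have hfp : f (a • u + b • w) = c := by
        rw [f.map_add, f.map_smul, f.map_smul, hfu, hfw]
        simp only [smul_eq_mul]
        rw [← add_mul, hab, one_mul]
      refine ⟨(convex_convexHull ℝ S).segment_subset huh hwh ⟨a, b, ha, hb, hab, rfl⟩, ?_⟩
      intro q hq
      rw [hfp]
      exact hhull q hq
    · rintro ⟨hp, hmax⟩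
      have hfp : f p = c := by
        refine le_antisymm (hhull p hp) ?_
        have := hmax u huh
        rw [hfu] at this
        exact this
      -- finite support decomposition
      set F : Finset (Fin n × Fin n → ℝ) := hfin.toFinset with hF
      have hSF : (↑F : Set (Fin n × Fin n → ℝ)) = S := hfin.coe_toFinset
      rw [← hSF, Finset.convexHull_eq] at hp
      obtain ⟨lam, h0, h1, hcm⟩ := hp
      set G : Finset (Fin n × Fin n → ℝ) := F.filter (fun y => lam y ≠ 0) with hG
      have hGsum : ∑ y ∈ G, lam y = 1 := by
        rw [hG, Finset.sum_filter_of_ne (fun y _ hy => hy)] at *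
        exact h1
      have hfy : ∀ y ∈ F, f y ≤ c := fun y hy => hle y (hSF ▸ Finset.mem_coe.mpr hy)
      have hzero : ∑ y ∈ F, lam y * (c - f y) = 0 := by
        have hfp' : ∑ y ∈ F, lam y * f y = c := by
          have : f p = ∑ y ∈ F, lam y * f y := by
            rw [← hcm, Finset.centerMass_eq_of_sum_1 _ _ h1]
            rw [map_sum]
            congr 1
            ext y
            rw [f.map_smul]
            rfl
          rw [← this, hfp]
        have : ∑ y ∈ F, lam y * (c - f y) =
            (∑ y ∈ F, lam y) * c - ∑ y ∈ F, lam y * f y := by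
          rw [Finset.sum_mul, ← Finset.sum_sub_distrib]
          congr 1
          ext y
          ring
        rw [this, h1, one_mul, hfp', sub_self]
      have hterm : ∀ y ∈ F, lam y * (c - f y) = 0 := by
        have hnn : ∀ y ∈ F, 0 ≤ lam y * (c - f y) := by
          intro y hy
          exact mul_nonneg (h0 y hy) (by linarith [hfy y hy])
        intro y hy
        exact (Finset.sum_eq_zero_iff_of_nonneg hnn).mp hzero y hy
      have hGuw : ∀ y ∈ G, y = u ∨ y = w := by
        intro y hy
        rw [hG, Finset.mem_filter] at hy
        obtain ⟨hyF, hyne⟩ := hy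
        have hfyc : f y = c := by
          have := hterm y hyF
          rcases mul_eq_zero.mp this with h | h
          · exact absurd h hyne
          · linarith
        exact heq y (hSF ▸ Finset.mem_coe.mpr hyF) hfyc
      have hpG : p = G.centerMass lam id := by
        rw [hG, Finset.centerMass_filter_ne_zero, hcm]
      have : p ∈ convexHull ℝ ({u, w} : Set (Fin n × Fin n → ℝ)) := by
        rw [hpG]
        apply Finset.centerMass_mem_convexHull
        · intro y hy
          exact h0 y (Finset.mem_of_mem_filter _ hy)
        · rw [hGsum]; norm_num
        · intro y hy
          rcases hGuw y hy with rfl | rfl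
          · exact Set.mem_insert _ _
          · exact Set.mem_insert_of_mem _ rfl
      rw [convexHull_pair] at this
      exact this
  -- exposedness
  set l : (Fin n × Fin n → ℝ) →L[ℝ] ℝ := LinearMap.toContinuousLinearMap f with hl
  have hlf : ∀ q, l q = f q := fun q => rfl
  have hBeq : segment ℝ u w = l.toExposed (convexHull ℝ S) := by
    rw [hseg]
    unfold ContinuousLinearMap.toExposed
    simp only [hlf]
  rw [hBeq]
  exact (ContinuousLinearMap.toExposed.isExposed).isExtreme

end PSBgo
namespace PSBgo

variable {n k s k' s' : ℕ} {x x' : Equiv.Perm (Fin n)}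

lemma adjacency (hx : XF n k s x) (hx' : XF n k' s' x') (hpx : IsPSB x) (hpx' : IsPSB x')
    (hne : x ≠ x') : AdjacentIn (PSBvertices n) (chv x) (chv x') := by
  apply adj_general (fW (unionW x x')) (n : ℝ)
  · exact ⟨x, hpx, rfl⟩
  · exact ⟨x', hpx', rfl⟩
  · exact fun h => hne (chv_injective h)
  · rintro v ⟨τ, _, rfl⟩
    exact fW_chv_le _ _ _
  · exact fW_self _ _
  · exact fW_self' _ _
  · rintro v ⟨τ, hτ, rfl⟩ hveq
    have hopt : ∀ i, τ i = x i ∨ τ i = x' i := by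
      intro i
      rcases (fW_chv_eq_iff x x' τ).mp hveq i with h | h
      · exact Or.inl h.symm
      · exact Or.inr h.symm
    rcases P3 hx hx' hτ hopt with h | h
    · exact Or.inl (by rw [h])
    · exact Or.inr (by rw [h])
  · exact Set.Finite.image _ (Set.toFinite _)

end PSBgo

/-- For even `n`, the `⌊n/2⌋²` pyramidal tours `x k s` (no step-backs, ascending
exactly on cities `2,…,k+1` and `n-s,…,n-1`) are pairwise distinct with pairwise
adjacent vertices of `PSB(n)`; hence the clique number of the 1-skeleton of
`PSB(n)` is at least `⌊n/2⌋²`. -/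
theorem stmt4 (n : ℕ) (hn : Even n) (h4 : 4 ≤ n)
    (x : ℕ → ℕ → Equiv.Perm (Fin n))
    (hpsb : ∀ k s, k ≤ (n - 2) / 2 → s ≤ (n - 2) / 2 → IsPSB (x k s))
    (hnosb : ∀ k s, k ≤ (n - 2) / 2 → s ≤ (n - 2) / 2 →
      ∀ i : Fin n, ¬ IsStepBackPeak (x k s) i)
    (hasc : ∀ k s, k ≤ (n - 2) / 2 → s ≤ (n - 2) / 2 →
      ∀ i : Fin n, 1 ≤ (i : ℕ) → (i : ℕ) ≤ n - 2 →
        (i < x k s i ↔ ((i : ℕ) ≤ k ∨ n - 1 - s ≤ (i : ℕ)))) :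
    (∀ k s k' s', k ≤ (n - 2) / 2 → s ≤ (n - 2) / 2 → k' ≤ (n - 2) / 2 → s' ≤ (n - 2) / 2 →
      (k, s) ≠ (k', s') →
      x k s ≠ x k' s' ∧ AdjacentIn (PSBvertices n) (chv (x k s)) (chv (x k' s'))) ∧
    ∃ V : Finset (Fin n × Fin n → ℝ), ↑V ⊆ PSBvertices n ∧
      (∀ u ∈ V, ∀ w ∈ V, u ≠ w → AdjacentIn (PSBvertices n) u w) ∧
      (n / 2) ^ 2 ≤ V.card := by
  classical
  have hev : n % 2 = 0 := Nat.even_iff.mp hn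
  have hXF : ∀ k s, k ≤ (n - 2) / 2 → s ≤ (n - 2) / 2 → PSBgo.XF n k s (x k s) :=
    fun k s hk hs => PSBgo.mkXF h4 hev hk hs (hpsb k s hk hs) (hnosb k s hk hs)
      (hasc k s hk hs)
  have hmain : ∀ k s k' s', k ≤ (n - 2) / 2 → s ≤ (n - 2) / 2 → k' ≤ (n - 2) / 2 →
      s' ≤ (n - 2) / 2 → (k, s) ≠ (k', s') →
      x k s ≠ x k' s' ∧ AdjacentIn (PSBvertices n) (chv (x k s)) (chv (x k' s')) := by
    intro k s k' s' hk hs hk' hs' hne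
    have hxne := PSBgo.xdistinct (hXF k s hk hs) (hXF k' s' hk' hs') hne
    exact ⟨hxne, PSBgo.adjacency (hXF k s hk hs) (hXF k' s' hk' hs')
      (hpsb k s hk hs) (hpsb k' s' hk' hs') hxne⟩
  refine ⟨hmain, ?_⟩
  have hhalf : ∀ a : ℕ, a < n / 2 → a ≤ (n - 2) / 2 := by intro a ha; omega
  refine ⟨((Finset.range (n / 2)) ×ˢ (Finset.range (n / 2))).image
    (fun p => chv (x p.1 p.2)), ?_, ?_, ?_⟩
  · intro v hv
    rw [Finset.mem_coe, Finset.mem_image] at hv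
    obtain ⟨p, hp, rfl⟩ := hv
    rw [Finset.mem_product, Finset.mem_range, Finset.mem_range] at hp
    exact ⟨x p.1 p.2, hpsb p.1 p.2 (hhalf _ hp.1) (hhalf _ hp.2), rfl⟩
  · intro u hu w hw hneuw
    rw [Finset.mem_image] at hu hw
    obtain ⟨p, hp, rfl⟩ := hu
    obtain ⟨q, hq, rfl⟩ := hw
    rw [Finset.mem_product, Finset.mem_range, Finset.mem_range] at hp hq
    have hpq : (p.1, p.2) ≠ (q.1, q.2) := by
      intro hh
      apply hneuw
      have h1 : p.1 = q.1 := congrArg Prod.fst hh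
      have h2 : p.2 = q.2 := congrArg Prod.snd hh
      rw [h1, h2]
    exact (hmain p.1 p.2 q.1 q.2 (hhalf _ hp.1) (hhalf _ hp.2) (hhalf _ hq.1)
      (hhalf _ hq.2) hpq).2
  · rw [Finset.card_image_of_injOn]
    · rw [Finset.card_product, Finset.card_range]
      exact le_of_eq (sq (n / 2))
    · intro p hp q hq hchv
      simp only [Finset.coe_product, Set.mem_prod, Finset.mem_coe, Finset.mem_range] at hp hq
      have hxeq : x p.1 p.2 = x q.1 q.2 := PSBgo.chv_injective hchv
      by_contra hne
      have hpq : (p.1, p.2) ≠ (q.1, q.2) := by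
        intro hh
        apply hne
        have h1 : p.1 = q.1 := congrArg Prod.fst hh
        have h2 : p.2 = q.2 := congrArg Prod.snd hh
        exact Prod.ext h1 h2
      exact (hmain p.1 p.2 q.1 q.2 (hhalf _ hp.1) (hhalf _ hp.2) (hhalf _ hq.1)
        (hhalf _ hq.2) hpq).1 hxeq
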